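/- Let X and Y be complex Banach spaces, A : X → Y and B, C : Y → X bounded linear operators satisfying A(BA)² = ABACA = ACABA = (AC)²A. Then (i) AC − I is upper semi-Fredholm if and only if BA − I is upper semi-Fredholm, and (ii) AC − I is lower semi-Fredholm if and only if BA − I is lower semi-Fredholm. -/

import Mathlib

open ContinuousLinearMap Filter Topology Set

/-- `T` is upper semi-Fredholm : closed range and finite-dimensional kernel. -/
def UpperSemiFredholm {E : Type*} [NormedAddCommGroup E] [NormedSpace ℂ E]
    (T : E →L[ℂ] E) : Prop :=
  IsClosed (Set.range T) ∧ FiniteDimensional ℂ (LinearMap.ker (T : E →ₗ[ℂ] E))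

/-- `T` is lower semi-Fredholm : its range has finite codimension. -/
def LowerSemiFredholm {E : Type*} [NormedAddCommGroup E] [NormedSpace ℂ E]
    (T : E →L[ℂ] E) : Prop :=
  FiniteDimensional ℂ (E ⧸ LinearMap.range (T : E →ₗ[ℂ] E))

section Aux

variable {X Y : Type*} [NormedAddCommGroup X] [NormedSpace ℂ X]
  [NormedAddCommGroup Y] [NormedSpace ℂ Y]

/-- Jacobson-type lemma, upper semi-Fredholm direction. -/
lemma jac_upper (A : X →L[ℂ] Y) (B : Y →L[ℂ] X)
    (h : UpperSemiFredholm (A ∘L B - 1)) : UpperSemiFredholm (B ∘L A - 1) := by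
  obtain ⟨hc, hk⟩ := h
  constructor
  · have hset : Set.range ⇑(B ∘L A - 1) = ⇑A ⁻¹' Set.range ⇑(A ∘L B - 1) := by
      ext x
      constructor
      · rintro ⟨u, rfl⟩
        refine ⟨A u, ?_⟩
        simp [sub_apply, comp_apply, map_sub]
      · rintro ⟨w, hw⟩
        refine ⟨B w - x, ?_⟩
        have hw' : B ((A ∘L B - 1) w) = B (A x) := by rw [hw]
        simp only [sub_apply, comp_apply, one_apply_eq_self, map_sub] at hw' ⊢
        have h2 : B (A (B w)) = B (A x) + B w := by
          rw [← hw']; abel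
        rw [h2]; abel
    rw [hset]
    exact hc.preimage A.continuous
  · haveI := hk
    have hmap : ∀ x ∈ LinearMap.ker ((B ∘L A - 1 : X →L[ℂ] X) : X →ₗ[ℂ] X),
        (A : X →ₗ[ℂ] Y) x ∈ LinearMap.ker ((A ∘L B - 1 : Y →L[ℂ] Y) : Y →ₗ[ℂ] Y) := by
      intro x hx
      have hx' : B (A x) = x := by
        have := hx
        simp only [LinearMap.mem_ker, ContinuousLinearMap.coe_coe, sub_apply, comp_apply, one_apply_eq_self,
          sub_eq_zero] at this
        exact this
      simp [LinearMap.mem_ker, sub_apply, comp_apply, hx']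
    refine FiniteDimensional.of_injective
      ((A : X →ₗ[ℂ] Y).restrict hmap) ?_
    intro x y hxy
    have hxy' : A (x : X) = A (y : X) := congrArg Subtype.val hxy
    have hxk : B (A (x : X)) = (x : X) := by
      have := x.2
      simp only [LinearMap.mem_ker, ContinuousLinearMap.coe_coe, sub_apply, comp_apply, one_apply_eq_self,
        sub_eq_zero] at this
      exact this
    have hyk : B (A (y : X)) = (y : X) := by
      have := y.2
      simp only [LinearMap.mem_ker, ContinuousLinearMap.coe_coe, sub_apply, comp_apply, one_apply_eq_self,
        sub_eq_zero] at this
      exact this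
    ext
    rw [← hxk, ← hyk, hxy']

/-- Jacobson-type lemma, lower semi-Fredholm direction. -/
lemma jac_lower (A : X →L[ℂ] Y) (B : Y →L[ℂ] X)
    (h : LowerSemiFredholm (A ∘L B - 1)) : LowerSemiFredholm (B ∘L A - 1) := by
  haveI : FiniteDimensional ℂ (Y ⧸ LinearMap.range ((A ∘L B - 1 : Y →L[ℂ] Y) : Y →ₗ[ℂ] Y)) := h
  set R : Submodule ℂ X := LinearMap.range ((B ∘L A - 1 : X →L[ℂ] X) : X →ₗ[ℂ] X) with hR
  let g : Y →ₗ[ℂ] X ⧸ R := R.mkQ ∘ₗ (B : Y →ₗ[ℂ] X)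
  have hle : LinearMap.range ((A ∘L B - 1 : Y →L[ℂ] Y) : Y →ₗ[ℂ] Y) ≤ LinearMap.ker g := by
    rintro y ⟨w, rfl⟩
    have hmem : B ((A ∘L B - 1) w) ∈ R := by
      refine ⟨B w, ?_⟩
      simp [sub_apply, comp_apply, map_sub]
    simp only [LinearMap.mem_ker, g, LinearMap.comp_apply,
      ContinuousLinearMap.coe_coe, Submodule.mkQ_apply,
      Submodule.Quotient.mk_eq_zero]
    exact hmem
  have hs : Function.Surjective ((LinearMap.range ((A ∘L B - 1 : Y →L[ℂ] Y) : Y →ₗ[ℂ] Y)).liftQ g hle) := by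
    intro q
    obtain ⟨x, rfl⟩ := Submodule.mkQ_surjective R q
    refine ⟨Submodule.Quotient.mk (A x), ?_⟩
    have hmem : B (A x) - x ∈ R := by
      refine ⟨x, ?_⟩
      simp [sub_apply, comp_apply]
    calc (LinearMap.range ((A ∘L B - 1 : Y →L[ℂ] Y) : Y →ₗ[ℂ] Y)).liftQ g hle (Submodule.Quotient.mk (A x))
        = R.mkQ (B (A x)) := rfl
      _ = R.mkQ x := by
          rw [Submodule.mkQ_apply, Submodule.mkQ_apply, Submodule.Quotient.eq]
          exact hmem
  exact Module.Finite.of_surjective _ hs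

/-- Transfer of upper semi-Fredholmness along an equivalence `S = e ∘ T ∘ f`. -/
lemma conj_upper (T S : Y →L[ℂ] Y) (e f : Y ≃L[ℂ] Y)
    (h : ∀ y, S y = e (T (f y))) (hT : UpperSemiFredholm T) :
    UpperSemiFredholm S := by
  obtain ⟨hc, hk⟩ := hT
  constructor
  · have hs : Set.range ⇑S = ⇑e '' Set.range ⇑T := by
      ext y
      constructor
      · rintro ⟨x, rfl⟩
        exact ⟨T (f x), ⟨f x, rfl⟩, (h x).symm⟩
      · rintro ⟨-, ⟨z, rfl⟩, rfl⟩
        exact ⟨f.symm z, by rw [h]; simp⟩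
    rw [hs]
    exact e.toHomeomorph.isClosedMap _ hc
  · haveI := hk
    have hmap : ∀ x ∈ LinearMap.ker (S : Y →ₗ[ℂ] Y),
        ((f : Y →L[ℂ] Y) : Y →ₗ[ℂ] Y) x ∈ LinearMap.ker (T : Y →ₗ[ℂ] Y) := by
      intro x hx
      have hx0 : S x = 0 := hx
      rw [h x] at hx0
      have : T (f x) = 0 := by
        apply e.injective
        simpa using hx0
      simpa [LinearMap.mem_ker] using this
    refine FiniteDimensional.of_injective
      ((((f : Y →L[ℂ] Y)) : Y →ₗ[ℂ] Y).restrict hmap) ?_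
    intro x y hxy
    have : f (x : Y) = f (y : Y) := congrArg Subtype.val hxy
    ext
    exact f.injective this

/-- Transfer of lower semi-Fredholmness along an equivalence `S = e ∘ T ∘ f`. -/
lemma conj_lower (T S : Y →L[ℂ] Y) (e f : Y ≃L[ℂ] Y)
    (h : ∀ y, S y = e (T (f y))) (hT : LowerSemiFredholm T) :
    LowerSemiFredholm S := by
  haveI : FiniteDimensional ℂ (Y ⧸ LinearMap.range (T : Y →ₗ[ℂ] Y)) := hT
  have hmap : (LinearMap.range (T : Y →ₗ[ℂ] Y)).map (e.toLinearEquiv : Y →ₗ[ℂ] Y)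
      = LinearMap.range (S : Y →ₗ[ℂ] Y) := by
    apply le_antisymm
    · rintro - ⟨-, ⟨z, rfl⟩, rfl⟩
      exact ⟨f.symm z, by change S (f.symm z) = _; rw [h]; simp⟩
    · rintro - ⟨x, rfl⟩
      exact ⟨T (f x), ⟨f x, rfl⟩, (h x).symm⟩
  exact Module.Finite.equiv
    (Submodule.Quotient.equiv (LinearMap.range (T : Y →ₗ[ℂ] Y)) (LinearMap.range (S : Y →ₗ[ℂ] Y))
      e.toLinearEquiv hmap)

/-- From the four vanishing conditions, `U - 1` is equivalent to `P - 1`. -/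
lemma key_equiv (U P : Y →L[ℂ] Y)
    (e1 : ∀ y, U ((U - P) (U y)) = 0)
    (e2 : ∀ y, U ((U - P) (P y)) = 0)
    (e3 : ∀ y, P ((U - P) (U y)) = 0)
    (e4 : ∀ y, P ((U - P) (P y)) = 0) :
    ∃ e f : Y ≃L[ℂ] Y, ∀ y, (U - 1) y = e ((P - 1) (f y)) := by
  set N : Y →L[ℂ] Y := U - P with hN
  set M : Y →L[ℂ] Y := U ∘L N with hM
  have n3 : ∀ y, N (N (N y)) = 0 := by
    intro y
    have h1 : N (N (U y)) = 0 := by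
      calc N (N (U y)) = U (N (U y)) - P (N (U y)) := by rw [hN]; simp [sub_apply]
        _ = 0 := by rw [e1 y, e3 y, sub_zero]
    have h2 : N (N (P y)) = 0 := by
      calc N (N (P y)) = U (N (P y)) - P (N (P y)) := by rw [hN]; simp [sub_apply]
        _ = 0 := by rw [e2 y, e4 y, sub_zero]
    calc N (N (N y)) = N (N (U y - P y)) := by rw [hN]; simp [sub_apply]
      _ = N (N (U y)) - N (N (P y)) := by rw [map_sub, map_sub]
      _ = 0 := by rw [h1, h2, sub_zero]
  have m2 : ∀ y, M (M y) = 0 := by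
    intro y
    calc M (M y) = U (N (U (N y))) := by rw [hM]; simp [comp_apply]
      _ = 0 := e1 (N y)
  -- f : inverse of (1 + N)
  have hfg : ∀ y : Y, (1 + N) (((1 : Y →L[ℂ] Y) - N + N ∘L N) y) = y := by
    intro y
    simp only [add_apply, sub_apply, one_apply_eq_self, comp_apply, map_add, map_sub]
    rw [n3 y]
    abel
  have hgf : ∀ y : Y, ((1 : Y →L[ℂ] Y) - N + N ∘L N) ((1 + N) y) = y := by
    intro y
    simp only [add_apply, sub_apply, one_apply_eq_self, comp_apply, map_add, map_sub]
    rw [n3 y]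
    abel
  have heg : ∀ y : Y, ((1 : Y →L[ℂ] Y) + M) (((1 : Y →L[ℂ] Y) - M) y) = y := by
    intro y
    simp only [add_apply, sub_apply, one_apply_eq_self, map_sub]
    rw [m2 y]
    abel
  have hge : ∀ y : Y, ((1 : Y →L[ℂ] Y) - M) (((1 : Y →L[ℂ] Y) + M) y) = y := by
    intro y
    simp only [add_apply, sub_apply, one_apply_eq_self, map_add]
    rw [m2 y]
    abel
  refine ⟨ContinuousLinearEquiv.equivOfInverse ((1 : Y →L[ℂ] Y) - M)
      ((1 : Y →L[ℂ] Y) + M) heg hge,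
    ContinuousLinearEquiv.equivOfInverse ((1 : Y →L[ℂ] Y) - N + N ∘L N)
      ((1 : Y →L[ℂ] Y) + N) hfg hgf, ?_⟩
  intro y
  simp only [ContinuousLinearEquiv.equivOfInverse_apply]
  -- key identity: (U - 1) ((1 + N) z) = (1 - M) ((P - 1) z) for all z
  have kid : ∀ z : Y, (U - 1) (((1 : Y →L[ℂ] Y) + N) z) = ((1 : Y →L[ℂ] Y) - M) ((P - 1) z) := by
    intro z
    have hMz : M ((P : Y →L[ℂ] Y) z) = 0 := by
      calc M (P z) = U (N (P z)) := by rw [hM]; simp [comp_apply]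
        _ = 0 := e2 z
    have hMz' : M z = U (N z) := by rw [hM]; simp [comp_apply]
    have hNz : N z = U z - P z := by rw [hN]; simp [sub_apply]
    simp only [add_apply, sub_apply, one_apply_eq_self, map_add, map_sub]
    rw [hMz, hMz', hNz]
    abel
  have := kid (((1 : Y →L[ℂ] Y) - N + N ∘L N) y)
  rw [hfg y] at this
  exact this

end Aux

theorem stmt_18 {X Y : Type*} [NormedAddCommGroup X] [NormedSpace ℂ X] [CompleteSpace X]
    [NormedAddCommGroup Y] [NormedSpace ℂ Y] [CompleteSpace Y]
    (A : X →L[ℂ] Y) (B C : Y →L[ℂ] X)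
    (h1 : A ∘L B ∘L A ∘L B ∘L A = A ∘L B ∘L A ∘L C ∘L A)
    (h2 : A ∘L B ∘L A ∘L C ∘L A = A ∘L C ∘L A ∘L B ∘L A)
    (h3 : A ∘L C ∘L A ∘L B ∘L A = A ∘L C ∘L A ∘L C ∘L A) :
    (UpperSemiFredholm (A ∘L C - 1) ↔ UpperSemiFredholm (B ∘L A - 1)) ∧
    (LowerSemiFredholm (A ∘L C - 1) ↔ LowerSemiFredholm (B ∘L A - 1)) := by
  -- pointwise versions of h1, h3
  have h1' : ∀ z : X, A (B (A (B (A z)))) = A (B (A (C (A z)))) := by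
    intro z
    have := ContinuousLinearMap.ext_iff.mp h1 z
    simpa [comp_apply] using this
  have h3' : ∀ z : X, A (C (A (B (A z)))) = A (C (A (C (A z)))) := by
    intro z
    have := ContinuousLinearMap.ext_iff.mp h3 z
    simpa [comp_apply] using this
  set U : Y →L[ℂ] Y := A ∘L B with hU
  set P : Y →L[ℂ] Y := A ∘L C with hP
  have e1 : ∀ y, U ((U - P) (U y)) = 0 := by
    intro y
    simp only [hU, hP, sub_apply, comp_apply, map_sub]
    rw [h1' (B y)]
    exact sub_self _
  have e2 : ∀ y, U ((U - P) (P y)) = 0 := by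
    intro y
    simp only [hU, hP, sub_apply, comp_apply, map_sub]
    rw [h1' (C y)]
    exact sub_self _
  have e3 : ∀ y, P ((U - P) (U y)) = 0 := by
    intro y
    simp only [hU, hP, sub_apply, comp_apply, map_sub]
    rw [h3' (B y)]
    exact sub_self _
  have e4 : ∀ y, P ((U - P) (P y)) = 0 := by
    intro y
    simp only [hU, hP, sub_apply, comp_apply, map_sub]
    rw [h3' (C y)]
    exact sub_self _
  obtain ⟨e, f, hef⟩ := key_equiv U P e1 e2 e3 e4
  -- hef : ∀ y, (U - 1) y = e ((P - 1) (f y))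
  have hef' : ∀ y, (P - 1) y = e.symm ((U - 1) (f.symm y)) := by
    intro y
    rw [hef (f.symm y)]
    simp
  have iff1u : UpperSemiFredholm (P - 1) ↔ UpperSemiFredholm (U - 1) :=
    ⟨fun h => conj_upper (P - 1) (U - 1) e f hef h,
     fun h => conj_upper (U - 1) (P - 1) e.symm f.symm hef' h⟩
  have iff1l : LowerSemiFredholm (P - 1) ↔ LowerSemiFredholm (U - 1) :=
    ⟨fun h => conj_lower (P - 1) (U - 1) e f hef h,
     fun h => conj_lower (U - 1) (P - 1) e.symm f.symm hef' h⟩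
  have iff2u : UpperSemiFredholm (U - 1) ↔ UpperSemiFredholm (B ∘L A - 1) :=
    ⟨fun h => jac_upper A B (by rwa [hU] at h), fun h => by
      rw [hU]; exact jac_upper B A h⟩
  have iff2l : LowerSemiFredholm (U - 1) ↔ LowerSemiFredholm (B ∘L A - 1) :=
    ⟨fun h => jac_lower A B (by rwa [hU] at h), fun h => by
      rw [hU]; exact jac_lower B A h⟩
  exact ⟨by rw [← hP] at *; exact iff1u.trans iff2u,
         by rw [← hP] at *; exact iff1l.trans iff2l⟩
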